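/- Let X and Λ be independent real random variables such that |X| ≤ B almost surely and Λ is uniformly distributed on [−γ, γ] with γ ≥ B. Then E[γ · sign(X + Λ)] = E[X]. -/

import Mathlib

open MeasureTheory ProbabilityTheory
open scoped ENNReal

noncomputable section

/-- `sgn x = 1` if `x ≥ 0`, and `-1` otherwise. -/
def sgn (x : ℝ) : ℝ := if 0 ≤ x then 1 else -1

/-- Truncation at level `η`: `x ↦ sign(x) · min {|x|, η}`. -/
def trunc (η x : ℝ) : ℝ := sgn x * min |x| η

/-- The law of the uniform distribution on the interval `[-γ, γ]`. -/
def unifLaw (γ : ℝ) : Measure ℝ :=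
  (ENNReal.ofReal (2 * γ))⁻¹ • (volume.restrict (Set.Icc (-γ) γ))

/-- The law of the uniform distribution on the cube `[-γ, γ]^d`. -/
def unifCubeLaw (d : ℕ) (γ : ℝ) : Measure (Fin d → ℝ) :=
  Measure.pi fun _ : Fin d => unifLaw γ

/-- The sub-Gaussian (ψ₂) norm of a real random variable. -/
def subgNorm {Ω : Type*} [MeasurableSpace Ω] (μ : Measure Ω) (X : Ω → ℝ) : ℝ :=
  sInf {t : ℝ | 0 < t ∧ ∫ ω, Real.exp (X ω ^ 2 / t ^ 2) ∂μ ≤ 2}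

/-- The sub-Gaussian (ψ₂) norm of a random vector: `sup_{‖V‖₂ = 1} ‖VᵀX‖_{ψ₂}`. -/
def subgNormVec {Ω : Type*} [MeasurableSpace Ω] {d : ℕ} (μ : Measure Ω)
    (X : Ω → Fin d → ℝ) : ℝ :=
  sSup {a : ℝ | ∃ V : Fin d → ℝ, ∑ i, V i ^ 2 = 1 ∧
    a = subgNorm μ fun ω => ∑ i, V i * X ω i}

/-- The Euclidean (ℓ₂) norm on `Fin d → ℝ`. -/
def l2Norm {d : ℕ} (v : Fin d → ℝ) : ℝ := Real.sqrt (∑ i, v i ^ 2)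

/-- The ℓ₁ norm on `Fin d → ℝ`. -/
def l1Norm {d : ℕ} (v : Fin d → ℝ) : ℝ := ∑ i, |v i|

/-- The Frobenius norm of a `d × d` matrix. -/
def frobNorm {d : ℕ} (A : Fin d → Fin d → ℝ) : ℝ := Real.sqrt (∑ i, ∑ j, A i j ^ 2)

/-- The entrywise maximum norm of a `d × d` matrix. -/
def maxNorm {d : ℕ} (A : Fin d → Fin d → ℝ) : ℝ := ⨆ i, ⨆ j, |A i j|

/-- The ℓ₂ → ℓ₂ operator (spectral) norm of a `d × d` matrix. -/
def opNorm {d : ℕ} (A : Fin d → Fin d → ℝ) : ℝ :=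
  sSup {a : ℝ | ∃ v : Fin d → ℝ, ∑ i, v i ^ 2 = 1 ∧
    a = Real.sqrt (∑ i, (∑ j, A i j * v j) ^ 2)}

/-- The singular values of a `d × d` real matrix (in some enumeration):
the square roots of the eigenvalues of `AᵀA`. -/
def singVals {d : ℕ} (A : Fin d → Fin d → ℝ) : Fin d → ℝ := fun i =>
  Real.sqrt ((show (Matrix.transpose (Matrix.of A) * Matrix.of A).IsHermitian by
    simpa using Matrix.isHermitian_conjTranspose_mul_self (Matrix.of A)).eigenvalues i)

/-- The nuclear norm: the sum of the singular values. -/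
def nucNorm {d : ℕ} (A : Fin d → Fin d → ℝ) : ℝ := ∑ i, singVals A i

/-- `|x| ^ q`, with the convention that it is `0` when `x = 0`
(so that `q = 0` counts nonzero entries). -/
def powAbs (q x : ℝ) : ℝ := if x = 0 then 0 else |x| ^ q

/-- Column-wise vectorization of a `d × d` matrix (indexed by pairs). -/
def vecM {d : ℕ} (A : Fin d → Fin d → ℝ) : Fin d × Fin d → ℝ := fun p => A p.1 p.2

/-- The standard basis matrix `eᵢ eⱼᵀ`. -/
def basisM {d : ℕ} (i j : Fin d) : Fin d → Fin d → ℝ := fun a b =>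
  if a = i ∧ b = j then 1 else 0

/-- The law of the uniform distribution on `{eᵢ eⱼᵀ : i, j ∈ [d]}`. -/
def mcLaw (d : ℕ) : Measure (Fin d → Fin d → ℝ) :=
  ((d : ℝ≥0∞) ^ 2)⁻¹ • ∑ i : Fin d, ∑ j : Fin d, Measure.dirac (basisM i j)

/-- The trace inner product `⟨A, B⟩ = Tr(AᵀB) = Σᵢⱼ Aᵢⱼ Bᵢⱼ`. -/
def minner {d : ℕ} (A B : Fin d → Fin d → ℝ) : ℝ := ∑ i, ∑ j, A i j * B i j

lemma sgn_measurable : Measurable sgn := by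
  unfold sgn
  exact Measurable.ite (measurableSet_le measurable_const measurable_id)
    measurable_const measurable_const

lemma abs_sgn (x : ℝ) : |sgn x| = 1 := by
  unfold sgn; split <;> simp

lemma unif_integral (γ x : ℝ) (hγ : 0 < γ) (hx : |x| ≤ γ) :
    ∫ l, γ * sgn (x + l) ∂(unifLaw γ) = x := by
  obtain ⟨h1, h2⟩ := abs_le.mp hx
  rw [unifLaw, integral_smul_measure]
  have hsplit : Set.Icc (-γ) γ = Set.Ico (-γ) (-x) ∪ Set.Icc (-x) γ :=
    (Set.Ico_union_Icc_eq_Icc (by linarith) (by linarith)).symm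
  have hdisj : Disjoint (Set.Ico (-γ) (-x)) (Set.Icc (-x) γ) := by
    rw [Set.disjoint_left]
    rintro a ⟨_, ha2⟩ ⟨hb1, _⟩
    linarith
  have heq1 : Set.EqOn (fun l => γ * sgn (x + l)) (fun _ => -γ) (Set.Ico (-γ) (-x)) := by
    intro l hl
    have : ¬ (0 ≤ x + l) := by simp only [Set.mem_Ico] at hl; linarith [hl.2]
    simp [sgn, this]
  have heq2 : Set.EqOn (fun l => γ * sgn (x + l)) (fun _ => γ) (Set.Icc (-x) γ) := by
    intro l hl
    have : 0 ≤ x + l := by simp only [Set.mem_Icc] at hl; linarith [hl.1]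
    simp [sgn, this]
  have hint1 : IntegrableOn (fun l => γ * sgn (x + l)) (Set.Ico (-γ) (-x)) volume := by
    refine ((integrableOn_const_iff (C := -γ)).mpr (Or.inr ?_)).congr_fun heq1.symm measurableSet_Ico
    exact measure_Ico_lt_top
  have hint2 : IntegrableOn (fun l => γ * sgn (x + l)) (Set.Icc (-x) γ) volume := by
    refine ((integrableOn_const_iff (C := γ)).mpr (Or.inr ?_)).congr_fun heq2.symm measurableSet_Icc
    exact measure_Icc_lt_top
  rw [hsplit, setIntegral_union hdisj measurableSet_Icc hint1 hint2,
    setIntegral_congr_fun measurableSet_Ico heq1,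
    setIntegral_congr_fun measurableSet_Icc heq2,
    setIntegral_const, setIntegral_const,
    Real.volume_real_Ico_of_le (by linarith), Real.volume_real_Icc_of_le (by linarith)]
  rw [ENNReal.toReal_inv, ENNReal.toReal_ofReal (by linarith)]
  have h2γ : (2 : ℝ) * γ ≠ 0 := by positivity
  field_simp
  ring_nf
  rw [mul_comm γ x, mul_inv_cancel_right₀ hγ.ne']

theorem statement_0
    {Ω : Type*} [MeasurableSpace Ω] (μ : Measure Ω) [IsProbabilityMeasure μ]
    (X Λ : Ω → ℝ) (B γ : ℝ)
    (hX : Measurable X) (hΛ : Measurable Λ)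
    (hindep : IndepFun X Λ μ)
    (hbound : ∀ᵐ ω ∂μ, |X ω| ≤ B)
    (hγpos : 0 < γ) (hBγ : B ≤ γ)
    (hlaw : Measure.map Λ μ = unifLaw γ) :
    ∫ ω, γ * sgn (X ω + Λ ω) ∂μ = ∫ ω, X ω ∂μ := by
  have hf : Measurable (fun p : ℝ × ℝ => γ * sgn (p.1 + p.2)) :=
    measurable_const.mul (sgn_measurable.comp (measurable_fst.add measurable_snd))
  have hmap : Measure.map (fun ω => (X ω, Λ ω)) μ
      = (Measure.map X μ).prod (Measure.map Λ μ) :=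
    (indepFun_iff_map_prod_eq_prod_map_map hX.aemeasurable hΛ.aemeasurable).mp hindep
  have hprob : IsProbabilityMeasure (Measure.map X μ) :=
    Measure.isProbabilityMeasure_map hX.aemeasurable
  have hprobΛ : IsProbabilityMeasure (Measure.map Λ μ) :=
    Measure.isProbabilityMeasure_map hΛ.aemeasurable
  have hbX : ∀ᵐ x ∂(Measure.map X μ), |x| ≤ B := by
    rw [ae_map_iff hX.aemeasurable]
    · exact hbound
    · exact measurableSet_le measurable_id.abs measurable_const
  have h1 : ∫ ω, γ * sgn (X ω + Λ ω) ∂μ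
      = ∫ p, γ * sgn (p.1 + p.2) ∂((Measure.map X μ).prod (Measure.map Λ μ)) := by
    rw [← hmap, integral_map (hX.prodMk hΛ).aemeasurable hf.aestronglyMeasurable]
  rw [h1]
  have hintf : Integrable (fun p : ℝ × ℝ => γ * sgn (p.1 + p.2))
      ((Measure.map X μ).prod (Measure.map Λ μ)) := by
    refine Integrable.mono' (integrable_const |γ|) hf.aestronglyMeasurable ?_
    filter_upwards with p
    rw [Real.norm_eq_abs, abs_mul, abs_sgn, mul_one]
  rw [integral_prod _ hintf]
  have hcongr : ∀ᵐ x ∂(Measure.map X μ),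
      (∫ l, γ * sgn (x + l) ∂(Measure.map Λ μ)) = x := by
    filter_upwards [hbX] with x hx
    rw [hlaw]
    exact unif_integral γ x hγpos (hx.trans hBγ)
  rw [integral_congr_ae hcongr]
  exact integral_map hX.aemeasurable aestronglyMeasurable_id
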